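/- For every v ∈ H the family (S_{w_γ,p_γ}(v_γ))_{γ∈Γ} is square-summable, so S_{W,P}(v) = Σ_γ S_{w_γ,p_γ}(v_γ) e_γ is a well-defined element of H; and the map S_{W,P} : H → H is nonexpansive: for all v, v' ∈ H, ‖S_{W,P}(v) − S_{W,P}(v')‖ ≤ ‖v − v'‖. -/

import Mathlib

open scoped RealInnerProductSpace
open Set Filter Topology
open scoped ENNReal

/-- Convexity of `x ↦ w * |x| ^ q` for `0 ≤ w`, `1 ≤ q`. -/
lemma aux_convexOn_weighted_abs_rpow (w q : ℝ) (hw : 0 ≤ w) (hq : 1 ≤ q) :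
    ConvexOn ℝ univ (fun x : ℝ => w * |x| ^ q) := by
  have habs : ConvexOn ℝ univ (fun x : ℝ => |x|) := by
    exact (convexOn_univ_norm (E := ℝ))
  have himg : (fun x : ℝ => |x|) '' univ = Ici 0 := by
    rw [image_univ]
    ext x
    simp only [mem_range, mem_Ici]
    constructor
    · rintro ⟨y, rfl⟩; exact abs_nonneg y
    · intro hx; exact ⟨x, abs_of_nonneg hx⟩
  have hg : ConvexOn ℝ ((fun x : ℝ => |x|) '' univ) (fun y : ℝ => y ^ q) := by
    rw [himg]; exact convexOn_rpow (le_trans (by norm_num) hq)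
  have hmono : MonotoneOn (fun y : ℝ => y ^ q) ((fun x : ℝ => |x|) '' univ) := by
    rw [himg]
    intro a ha b hb hab
    exact Real.rpow_le_rpow ha hab (by linarith)
  have := (hg.comp habs hmono).smul hw
  simpa [Function.comp] using this

/-- Firm nonexpansiveness of minimizers of `x ↦ x² - 2bx + φ x` for convex `φ`. -/
lemma aux_prox_nonexpansive (φ : ℝ → ℝ) (hφ : ConvexOn ℝ univ φ) (b b' s s' : ℝ)
    (h1 : ∀ x, s ^ 2 - 2 * b * s + φ s ≤ x ^ 2 - 2 * b * x + φ x)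
    (h2 : ∀ x, s' ^ 2 - 2 * b' * s' + φ s' ≤ x ^ 2 - 2 * b' * x + φ x) :
    |s - s'| ≤ |b - b'| := by
  have key : ∀ (β σ y : ℝ), (∀ x, σ ^ 2 - 2 * β * σ + φ σ ≤ x ^ 2 - 2 * β * x + φ x) →
      σ ^ 2 - 2 * β * σ + φ σ + (σ - y) ^ 2 ≤ y ^ 2 - 2 * β * y + φ y := by
    intro β σ y hmin
    have step : ∀ t : ℝ, t ∈ Ioo (0:ℝ) 1 →
        σ ^ 2 - 2 * β * σ + φ σ + (1 - t) * (σ - y) ^ 2 ≤ y ^ 2 - 2 * β * y + φ y := by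
      intro t ht
      obtain ⟨ht0, ht1⟩ := ht
      set x := (1 - t) * σ + t * y with hx
      have hφx : φ x ≤ (1 - t) * φ σ + t * φ y :=
        hφ.2 (mem_univ σ) (mem_univ y) (by linarith) (le_of_lt ht0) (by ring)
      have hmx := hmin x
      have hxsq : x ^ 2 = (1 - t) * σ ^ 2 + t * y ^ 2 - t * (1 - t) * (σ - y) ^ 2 := by
        rw [hx]; ring
      have : σ ^ 2 - 2 * β * σ + φ σ ≤
          (1 - t) * (σ ^ 2 - 2 * β * σ + φ σ) + t * (y ^ 2 - 2 * β * y + φ y)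
            - t * (1 - t) * (σ - y) ^ 2 := by
        calc σ ^ 2 - 2 * β * σ + φ σ ≤ x ^ 2 - 2 * β * x + φ x := hmx
        _ ≤ x ^ 2 - 2 * β * x + ((1 - t) * φ σ + t * φ y) := by linarith
        _ = (1 - t) * (σ ^ 2 - 2 * β * σ + φ σ) + t * (y ^ 2 - 2 * β * y + φ y)
            - t * (1 - t) * (σ - y) ^ 2 := by rw [hxsq, hx]; ring
      nlinarith [this, ht0, sq_nonneg (σ - y)]
    have hlim : Tendsto (fun t : ℝ => σ ^ 2 - 2 * β * σ + φ σ + (1 - t) * (σ - y) ^ 2)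
        (𝓝[>] 0) (𝓝 (σ ^ 2 - 2 * β * σ + φ σ + (1 - 0) * (σ - y) ^ 2)) := by
      apply Tendsto.mono_left _ nhdsWithin_le_nhds
      exact Continuous.tendsto (by continuity) 0
    have hev : ∀ᶠ t in 𝓝[>] (0:ℝ),
        σ ^ 2 - 2 * β * σ + φ σ + (1 - t) * (σ - y) ^ 2 ≤ y ^ 2 - 2 * β * y + φ y := by
      filter_upwards [Ioo_mem_nhdsGT_of_mem (by norm_num : (0:ℝ) ∈ Ico (0:ℝ) 1)] with t ht
        using step t ht
    have := le_of_tendsto hlim hev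
    simpa using this
  have k1 := key b s s' h1
  have k2 := key b' s' s h2
  have habs : (s - s') ^ 2 ≤ |b - b'| * |s - s'| := by
    calc (s - s') ^ 2 ≤ (b - b') * (s - s') := by nlinarith [k1, k2]
    _ ≤ |(b - b') * (s - s')| := le_abs_self _
    _ = |b - b'| * |s - s'| := abs_mul _ _
  rcases eq_or_lt_of_le (abs_nonneg (s - s')) with h | h
  · rw [← h]; exact abs_nonneg _
  · have : |s - s'| * |s - s'| ≤ |b - b'| * |s - s'| := by
      rwa [← abs_mul, abs_mul_self, ← sq]
    exact le_of_mul_le_mul_right this h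

/-- The thresholding map `S_{W,P}` is well defined (the family of thresholded coefficients
is square-summable) and nonexpansive. -/
theorem stmt_9
    {H : Type*} [NormedAddCommGroup H] [InnerProductSpace ℝ H] [CompleteSpace H]
    {Γ : Type*} [Countable Γ]
    (e : HilbertBasis Γ ℝ H)
    (w : Γ → ℝ) (c : ℝ) (hc : 0 < c) (hw : ∀ γ, c ≤ w γ)
    (p : Γ → ℝ) (hp : ∀ γ, 1 ≤ p γ ∧ p γ ≤ 2)
    (S : Γ → ℝ → ℝ)
    (hS : ∀ (γ : Γ) (b x : ℝ),
      (S γ b) ^ 2 - 2 * b * S γ b + w γ * |S γ b| ^ (p γ) ≤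
        x ^ 2 - 2 * b * x + w γ * |x| ^ (p γ)) :
    (∀ v : H, Summable (fun γ => (S γ ⟪v, e γ⟫) ^ 2)) ∧
    ∃ SWP : H → H,
      (∀ (v : H) (γ : Γ), ⟪SWP v, e γ⟫ = S γ ⟪v, e γ⟫) ∧
      ∀ v v' : H, ‖SWP v - SWP v'‖ ≤ ‖v - v'‖ := by
  have hw0 : ∀ γ, (0:ℝ) ≤ w γ := fun γ => le_trans hc.le (hw γ)
  -- bound: (S γ b)² ≤ 4 b²
  have hbound : ∀ (γ : Γ) (b : ℝ), (S γ b) ^ 2 ≤ 4 * b ^ 2 := by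
    intro γ b
    have h0 := hS γ b 0
    have hz : |(0:ℝ)| ^ (p γ) = 0 := by
      rw [abs_zero]
      exact Real.zero_rpow (by linarith [(hp γ).1])
    rw [hz] at h0
    have hφnn : 0 ≤ w γ * |S γ b| ^ (p γ) :=
      mul_nonneg (hw0 γ) (Real.rpow_nonneg (abs_nonneg _) _)
    nlinarith [sq_nonneg (S γ b - 2 * b)]
  -- nonexpansiveness of each coordinate map
  have hne : ∀ (γ : Γ) (b b' : ℝ), |S γ b - S γ b'| ≤ |b - b'| := by
    intro γ b b'
    exact aux_prox_nonexpansive (fun x => w γ * |x| ^ (p γ))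
      (aux_convexOn_weighted_abs_rpow (w γ) (p γ) (hw0 γ) (hp γ).1)
      b b' (S γ b) (S γ b') (hS γ b) (hS γ b')
  -- square-summability
  have hsummable : ∀ v : H, Summable (fun γ => (S γ ⟪v, e γ⟫) ^ 2) := by
    intro v
    have hv : Summable fun γ => ⟪v, e γ⟫ ^ 2 := by
      have := e.summable_inner_mul_inner v v
      refine this.congr fun γ => ?_
      rw [real_inner_comm (e γ) v, sq]
    refine Summable.of_nonneg_of_le (fun γ => sq_nonneg _) (fun γ => hbound γ _)
      ?_
    simpa using hv.mul_left 4
  refine ⟨hsummable, ?_⟩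
  have hrpow2 : ∀ x : ℝ, |x| ^ ((2:ℝ≥0∞).toReal) = x ^ 2 := by
    intro x
    rw [show ((2:ℝ≥0∞).toReal) = ((2:ℕ):ℝ) by norm_num, Real.rpow_natCast, sq_abs]
  -- membership in ℓ²
  have hmem : ∀ v : H, Memℓp (fun γ => S γ ⟪v, e γ⟫) 2 := by
    intro v
    apply memℓp_gen
    refine (hsummable v).congr fun γ => ?_
    rw [Real.norm_eq_abs, hrpow2]
  set F : H → lp (fun _ : Γ => ℝ) 2 := fun v => ⟨fun γ => S γ ⟪v, e γ⟫, hmem v⟩ with hF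
  set SWP : H → H := fun v => e.repr.symm (F v) with hSWP
  have hreprF : ∀ v : H, e.repr (SWP v) = F v := fun v => e.repr.apply_symm_apply (F v)
  refine ⟨SWP, ?_, ?_⟩
  · intro v γ
    rw [real_inner_comm, ← e.repr_apply_apply, hreprF]
  · intro v v'
    have h1 : ‖SWP v - SWP v'‖ = ‖F v - F v'‖ := by
      show ‖e.repr.symm (F v) - e.repr.symm (F v')‖ = _
      rw [← map_sub]
      exact e.repr.symm.norm_map _
    have h2 : ‖v - v'‖ = ‖e.repr (v - v')‖ := (e.repr.norm_map _).symm
    rw [h1, h2]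
    have h2pos : 0 < ((2:ℝ≥0∞).toReal) := by norm_num
    rw [← Real.rpow_le_rpow_iff (norm_nonneg _) (norm_nonneg _) h2pos]
    rw [lp.norm_rpow_eq_tsum h2pos, lp.norm_rpow_eq_tsum h2pos]
    have hsum1 : Summable fun γ => ‖(F v - F v') γ‖ ^ ((2:ℝ≥0∞).toReal) :=
      (lp.memℓp (F v - F v')).summable h2pos
    have hsum2 : Summable fun γ => ‖(e.repr (v - v')) γ‖ ^ ((2:ℝ≥0∞).toReal) :=
      (lp.memℓp (e.repr (v - v'))).summable h2pos
    refine Summable.tsum_le_tsum (fun γ => ?_) hsum1 hsum2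
    have hFv : (F v - F v') γ = S γ ⟪v, e γ⟫ - S γ ⟪v', e γ⟫ := rfl
    have hrv : (e.repr (v - v')) γ = ⟪v, e γ⟫ - ⟪v', e γ⟫ := by
      rw [e.repr_apply_apply, inner_sub_right, real_inner_comm (e γ) v,
        real_inner_comm (e γ) v']
    rw [hFv, hrv, Real.norm_eq_abs, Real.norm_eq_abs]
    exact Real.rpow_le_rpow (abs_nonneg _) (hne γ _ _) h2pos.le
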